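/- Let (Q, μ) be a finite measure space, let b₃ > 0, let a, b, ū : Q → ℝ be measurable and essentially bounded with a ≤ ū ≤ b μ-a.e., and let g : Q → ℝ be integrable. Assume the variational inequality ∫_Q (g + b₃ ū)(u − ū) dμ ≥ 0 holds for every measurable essentially bounded u : Q → ℝ with a ≤ u ≤ b μ-a.e. Then ū(x) = max{a(x), min{b(x), −g(x)/b₃}} for μ-a.e. x ∈ Q. -/

import Mathlib

open MeasureTheory

lemma memtop_bound {Q : Type*} [MeasurableSpace Q] {μ : Measure Q} {f : Q → ℝ}
    (hf : MemLp f ⊤ μ) : ∃ C : ℝ, ∀ᵐ x ∂μ, |f x| ≤ C := by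
  have h1 : eLpNormEssSup f μ < ⊤ := by
    have := hf.2; rwa [eLpNorm_exponent_top] at this
  refine ⟨(eLpNormEssSup f μ).toReal, ?_⟩
  filter_upwards [ae_le_eLpNormEssSup (f := f) (μ := μ)] with x hx
  have : ((‖f x‖₊ : ENNReal)).toReal ≤ (eLpNormEssSup f μ).toReal :=
    ENNReal.toReal_mono h1.ne hx
  simpa [Real.norm_eq_abs] using this

/-- From the variational inequality `∫ (g + b₃ ubar)(u - ubar) ≥ 0` over all admissible
controls `u` with `a ≤ u ≤ b` a.e., one deduces the pointwise projection formula
`ubar = max (a, min (b, -g/b₃))` a.e. -/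
theorem stmt1 {Q : Type*} [MeasurableSpace Q] (μ : Measure Q) [IsFiniteMeasure μ]
    (b₃ : ℝ) (hb₃ : 0 < b₃)
    (a b ubar : Q → ℝ)
    (ha : Measurable a) (hb : Measurable b) (hubar : Measurable ubar)
    (ha' : MemLp a ⊤ μ) (hb' : MemLp b ⊤ μ) (hubar' : MemLp ubar ⊤ μ)
    (hbound : ∀ᵐ x ∂μ, a x ≤ ubar x ∧ ubar x ≤ b x)
    (g : Q → ℝ) (hg : Integrable g μ)
    (hvi : ∀ u : Q → ℝ, Measurable u → MemLp u ⊤ μ →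
      (∀ᵐ x ∂μ, a x ≤ u x ∧ u x ≤ b x) →
      0 ≤ ∫ x, (g x + b₃ * ubar x) * (u x - ubar x) ∂μ) :
    ∀ᵐ x ∂μ, ubar x = max (a x) (min (b x) (-(g x) / b₃)) := by
  -- measurable representative of g
  set g' : Q → ℝ := hg.1.mk g with hg'def
  have hg'meas : Measurable g' := hg.1.stronglyMeasurable_mk.measurable
  have hgg' : g =ᵐ[μ] g' := hg.1.ae_eq_mk
  set p : Q → ℝ := fun x => max (a x) (min (b x) (-(g' x) / b₃)) with hpdef
  have hpmeas : Measurable p := ha.max (hb.min (hg'meas.neg.div_const b₃))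
  -- p is essentially bounded
  have hple : ∀ x, ‖p x‖ ≤ ‖|a x| + |b x|‖ := by
    intro x
    have h1 : p x ≤ max (a x) (b x) := max_le_max le_rfl (min_le_left _ _)
    have h2 : a x ≤ p x := le_max_left _ _
    rw [Real.norm_eq_abs, Real.norm_eq_abs, abs_le]
    constructor
    · have := neg_abs_le (a x)
      have h3 : |(|a x| + |b x|)| = |a x| + |b x| := abs_of_nonneg (by positivity)
      nlinarith [abs_nonneg (b x)]
    · have h3 : |(|a x| + |b x|)| = |a x| + |b x| := abs_of_nonneg (by positivity)
      rcases max_cases (a x) (b x) with ⟨h, _⟩ | ⟨h, _⟩ <;>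
        nlinarith [le_abs_self (a x), le_abs_self (b x), abs_nonneg (a x), abs_nonneg (b x)]
  have hpmem : MemLp p ⊤ μ :=
    MemLp.of_le ((ha'.norm.add hb'.norm)) hpmeas.aestronglyMeasurable
      (Filter.Eventually.of_forall hple)
  -- admissibility of p
  have hpadm : ∀ᵐ x ∂μ, a x ≤ p x ∧ p x ≤ b x := by
    filter_upwards [hbound] with x hx
    exact ⟨le_max_left _ _, max_le (hx.1.trans hx.2) (min_le_left _ _)⟩
  have hVI := hvi p hpmeas hpmem hpadm
  -- pointwise inequality
  have hpt : ∀ᵐ x ∂μ, (g x + b₃ * ubar x) * (p x - ubar x) ≤ -b₃ * (ubar x - p x) ^ 2 := by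
    filter_upwards [hbound, hgg'] with x hx hgx
    have hab : a x ≤ b x := hx.1.trans hx.2
    set t := -(g' x) / b₃ with ht
    have hgt : g x = -b₃ * t := by rw [hgx, ht]; field_simp
    have hkey : (t - p x) * (ubar x - p x) ≤ 0 := by
      rcases le_total t (a x) with h | h
      · have hpx : p x = a x := by
          simp only [hpdef]
          rw [min_eq_right (h.trans hab), max_eq_left h]
        rw [hpx]
        exact mul_nonpos_of_nonpos_of_nonneg (by linarith) (by linarith [hx.1])
      · rcases le_total t (b x) with h2 | h2
        · have hpx : p x = t := by
            simp only [hpdef]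
            rw [min_eq_right h2, max_eq_right h]
          rw [hpx]; simp
        · have hpx : p x = b x := by
            simp only [hpdef]
            rw [min_eq_left h2, max_eq_right hab]
          rw [hpx]
          exact mul_nonpos_of_nonneg_of_nonpos (by linarith) (by linarith [hx.2])
    rw [hgt]
    nlinarith [mul_nonneg hb₃.le (neg_nonneg.mpr hkey), sq_nonneg (ubar x - p x)]
  -- integrability
  obtain ⟨Cp, hCp⟩ := memtop_bound hpmem
  obtain ⟨Cu, hCu⟩ := memtop_bound hubar'
  have hint1 : Integrable (fun x => (g x + b₃ * ubar x) * (p x - ubar x)) μ := by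
    have hgu : Integrable (fun x => g x + b₃ * ubar x) μ :=
      hg.add ((hubar'.integrable le_top).const_mul b₃)
    have := hgu.bdd_mul (c := Cp + Cu) (hpmeas.sub hubar).aestronglyMeasurable ?_
    · simpa [mul_comm] using this
    · filter_upwards [hCp, hCu] with x h1 h2
      rw [Real.norm_eq_abs]
      calc |p x - ubar x| ≤ |p x| + |ubar x| := abs_sub _ _
        _ ≤ Cp + Cu := add_le_add h1 h2
  have hsqmem : MemLp (fun x => (ubar x - p x) ^ 2) ⊤ μ := by
    refine memLp_top_of_bound ((hubar.sub hpmeas).pow_const 2).aestronglyMeasurable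
      ((Cu + Cp) ^ 2) ?_
    filter_upwards [hCp, hCu] with x h1 h2
    rw [Real.norm_eq_abs, abs_pow]
    have : |ubar x - p x| ≤ Cu + Cp :=
      (abs_sub _ _).trans (add_le_add h2 h1)
    have h0 : (0:ℝ) ≤ |ubar x - p x| := abs_nonneg _
    nlinarith
  have hsqint : Integrable (fun x => (ubar x - p x) ^ 2) μ := hsqmem.integrable le_top
  have hint2 : Integrable (fun x => -b₃ * (ubar x - p x) ^ 2) μ := hsqint.const_mul _
  have hmono : ∫ x, (g x + b₃ * ubar x) * (p x - ubar x) ∂μ ≤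
      ∫ x, -b₃ * (ubar x - p x) ^ 2 ∂μ := integral_mono_ae hint1 hint2 hpt
  have hS : ∫ x, (ubar x - p x) ^ 2 ∂μ = 0 := by
    have h1 : ∫ x, -b₃ * (ubar x - p x) ^ 2 ∂μ = -b₃ * ∫ x, (ubar x - p x) ^ 2 ∂μ :=
      integral_const_mul _ _
    have h2 : 0 ≤ ∫ x, (ubar x - p x) ^ 2 ∂μ :=
      integral_nonneg fun x => sq_nonneg _
    nlinarith [hVI.trans hmono]
  have hz : ∀ᵐ x ∂μ, (ubar x - p x) ^ 2 = 0 := by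
    have := (integral_eq_zero_iff_of_nonneg_ae
      (Filter.Eventually.of_forall fun x => sq_nonneg (ubar x - p x)) hsqint).mp hS
    filter_upwards [this] with x hx
    simpa using hx
  filter_upwards [hz, hgg'] with x hx hgx
  have : ubar x = p x := by nlinarith [sq_nonneg (ubar x - p x)]
  rw [this, hpdef, hgx]
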